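/- Let β ∈ ℝ with β > 1 and A ⊂ ℤ[β] a finite alphabet with 0 ∈ A and Λ = max A ≠ 0. If Φ : (A+A)^p → A is the local rule of a p-local parallel addition in (β,A), then Φ(Λ,…,Λ) ≠ Λ. -/

import Mathlib

noncomputable section

open Pointwise

/-- `ℤ[β]` inside `ℝ`: the smallest subring of `ℝ` containing `β`. -/
def ZringR (β : ℝ) : Subring ℝ := Subring.closure {β}

/-- A `p`-local digit set conversion in base `β` from `B` to `A` (over `ℝ`), with memory `r`
and anticipation `t` (so `p = r + t + 1`), given by a local rule `Φ`. -/
def IsLocalConvR (β : ℝ) (B A : Set ℝ) (r t : ℕ)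
    (Φ : (Fin (r + t + 1) → ℝ) → ℝ) : Prop :=
  (∀ u : Fin (r + t + 1) → ℝ, (∀ i, u i ∈ B) → Φ u ∈ A) ∧
  ∀ w : ℤ → ℝ, (∀ j, w j ∈ B) → (Function.support w).Finite →
    (Function.support (fun j : ℤ => Φ fun i => w (j + (t : ℤ) - ((i : ℕ) : ℤ)))).Finite ∧
    ∑ᶠ j : ℤ, w j * β ^ j =
      ∑ᶠ j : ℤ, (Φ fun i => w (j + (t : ℤ) - ((i : ℕ) : ℤ))) * β ^ j

theorem stmt5 (β : ℝ) (hβ : 1 < β) (A : Finset ℝ)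
    (h0 : (0 : ℝ) ∈ A) (hA : (A : Set ℝ) ⊆ (ZringR β : Set ℝ))
    (hΛ : A.max' ⟨0, h0⟩ ≠ 0)
    (r t : ℕ) (Φ : (Fin (r + t + 1) → ℝ) → ℝ)
    (hpar : IsLocalConvR β ((A : Set ℝ) + (A : Set ℝ)) (A : Set ℝ) r t Φ) :
    Φ (fun _ => A.max' ⟨0, h0⟩) ≠ A.max' ⟨0, h0⟩ := by
  intro hcontra
  have hβ0 : (0:ℝ) < β := lt_trans one_pos hβ
  set Λ := A.max' ⟨0, h0⟩ with hΛdef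
  have hΛA : Λ ∈ A := A.max'_mem _
  have hΛpos : 0 < Λ := lt_of_le_of_ne (A.le_max' 0 h0) (Ne.symm hΛ)
  set m : ℤ := (r : ℤ) + (t : ℤ) with hm
  set hi : ℤ := 2*(r : ℤ) + 2*(t : ℤ) with hhi
  set u : ℤ → ℝ := (fun j => if 0 ≤ j ∧ j ≤ hi then Λ else 0) with hu
  set v : ℤ → ℝ := (fun j => if j = m then Λ + Λ else u j) with hv
  -- membership of digits in A + A
  have hΛB : Λ ∈ (A : Set ℝ) + (A : Set ℝ) := by
    have := Set.add_mem_add (a := Λ) (b := (0:ℝ)) hΛA h0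
    simpa using this
  have h2ΛB : Λ + Λ ∈ (A : Set ℝ) + (A : Set ℝ) := Set.add_mem_add hΛA hΛA
  have h0B : (0:ℝ) ∈ (A : Set ℝ) + (A : Set ℝ) := by
    simpa using Set.add_mem_add (a := (0:ℝ)) (b := (0:ℝ)) h0 h0
  have huB : ∀ j, u j ∈ (A : Set ℝ) + (A : Set ℝ) := by
    intro j
    by_cases h : 0 ≤ j ∧ j ≤ hi <;> simp [hu, h, hΛB, h0B]
  have hvB : ∀ j, v j ∈ (A : Set ℝ) + (A : Set ℝ) := by
    intro j
    by_cases h : j = m <;> simp [hv, h, h2ΛB, huB j]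
  -- finiteness of supports
  have hufin : (Function.support u).Finite := by
    apply (Set.finite_Icc (0:ℤ) hi).subset
    intro j hj
    rw [Function.mem_support] at hj
    by_cases h : 0 ≤ j ∧ j ≤ hi
    · exact Set.mem_Icc.mpr h
    · simp [hu, h] at hj
  have hvfin : (Function.support v).Finite := by
    apply ((Set.finite_Icc (0:ℤ) hi).insert m).subset
    intro j hj
    rw [Function.mem_support] at hj
    by_cases h : j = m
    · exact Set.mem_insert_iff.mpr (Or.inl h)
    · refine Set.mem_insert_iff.mpr (Or.inr ?_)
      by_cases h' : 0 ≤ j ∧ j ≤ hi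
      · exact Set.mem_Icc.mpr h'
      · simp [hv, hu, h, h'] at hj
  obtain ⟨hfu, hequ⟩ := hpar.2 u huB hufin
  obtain ⟨hfv, heqv⟩ := hpar.2 v hvB hvfin
  -- windows of u in the middle are constantly Λ
  have key1 : ∀ j : ℤ, m - t ≤ j → j ≤ m + r →
      (fun i : Fin (r + t + 1) => u (j + (t : ℤ) - ((i : ℕ) : ℤ))) = fun _ => Λ := by
    intro j h1 h2
    funext i
    have hib : (i : ℕ) < r + t + 1 := i.isLt
    have hcond : 0 ≤ j + (t : ℤ) - ((i : ℕ) : ℤ) ∧ j + (t : ℤ) - ((i : ℕ) : ℤ) ≤ hi := by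
      rw [hhi]; rw [hm] at h1 h2; omega
    simp only [hu]; exact if_pos hcond
  -- windows of v away from m agree with those of u
  have key2 : ∀ j : ℤ, j < m - t ∨ m + r < j →
      (fun i : Fin (r + t + 1) => v (j + (t : ℤ) - ((i : ℕ) : ℤ)))
        = fun i : Fin (r + t + 1) => u (j + (t : ℤ) - ((i : ℕ) : ℤ)) := by
    intro j hj
    funext i
    have hib : (i : ℕ) < r + t + 1 := i.isLt
    have hne : j + (t : ℤ) - ((i : ℕ) : ℤ) ≠ m := by
      rw [hm] at hj ⊢; omega
    simp [hv, hne]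
  -- finiteness of supports of the weighted sums
  have hufin' : (Function.support fun j : ℤ => u j * β ^ j).Finite := by
    apply hufin.subset
    intro j hj
    rw [Function.mem_support] at hj ⊢
    exact fun h => hj (by rw [h, zero_mul])
  have hvfin' : (Function.support fun j : ℤ => v j * β ^ j).Finite := by
    apply hvfin.subset
    intro j hj
    rw [Function.mem_support] at hj ⊢
    exact fun h => hj (by rw [h, zero_mul])
  -- the difference of the values of v and u is Λ * β ^ m
  have hum : u m = Λ := by
    have : (0:ℤ) ≤ m ∧ m ≤ hi := by rw [hm, hhi]; omega
    simp [hu, this]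
  have e1 : ∑ᶠ j : ℤ, (v j * β ^ j - u j * β ^ j) = Λ * β ^ m := by
    rw [finsum_eq_single _ m]
    · have hvm : v m = Λ + Λ := by simp [hv]
      rw [hvm, hum]; ring
    · intro j hj
      have : v j = u j := by simp [hv, hj]
      rw [this, sub_self]
  have e2 : ∑ᶠ j : ℤ, (v j * β ^ j - u j * β ^ j)
      = (∑ᶠ j : ℤ, v j * β ^ j) - ∑ᶠ j : ℤ, u j * β ^ j :=
    finsum_sub_distrib hvfin' hufin'
  -- the difference of the outputs
  have hfu' : (Function.support fun j : ℤ =>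
      (Φ fun i => u (j + (t : ℤ) - ((i : ℕ) : ℤ))) * β ^ j).Finite := by
    apply hfu.subset
    intro j hj
    rw [Function.mem_support] at hj ⊢
    exact fun h => hj (by rw [h, zero_mul])
  have hfv' : (Function.support fun j : ℤ =>
      (Φ fun i => v (j + (t : ℤ) - ((i : ℕ) : ℤ))) * β ^ j).Finite := by
    apply hfv.subset
    intro j hj
    rw [Function.mem_support] at hj ⊢
    exact fun h => hj (by rw [h, zero_mul])
  have e3 : (∑ᶠ j : ℤ, v j * β ^ j) - ∑ᶠ j : ℤ, u j * β ^ j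
      = ∑ᶠ j : ℤ, ((Φ fun i => v (j + (t : ℤ) - ((i : ℕ) : ℤ))) * β ^ j
          - (Φ fun i => u (j + (t : ℤ) - ((i : ℕ) : ℤ))) * β ^ j) := by
    rw [hequ, heqv, finsum_sub_distrib hfv' hfu']
  -- evaluate the output difference as a finite sum and bound it
  have e4 : ∑ᶠ j : ℤ, ((Φ fun i => v (j + (t : ℤ) - ((i : ℕ) : ℤ))) * β ^ j
          - (Φ fun i => u (j + (t : ℤ) - ((i : ℕ) : ℤ))) * β ^ j)
      = ∑ j ∈ Finset.Icc (m - t) (m + r),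
          ((Φ fun i => v (j + (t : ℤ) - ((i : ℕ) : ℤ))) * β ^ j
          - (Φ fun i => u (j + (t : ℤ) - ((i : ℕ) : ℤ))) * β ^ j) := by
    apply finsum_eq_finset_sum_of_support_subset
    intro j hj
    rw [Function.mem_support] at hj
    rw [Finset.coe_Icc, Set.mem_Icc]
    by_contra hcon
    rw [not_and_or, not_le, not_le] at hcon
    rw [key2 j hcon, sub_self] at hj
    exact hj rfl
  have e5 : ∑ j ∈ Finset.Icc (m - t) (m + r),
          ((Φ fun i => v (j + (t : ℤ) - ((i : ℕ) : ℤ))) * β ^ j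
          - (Φ fun i => u (j + (t : ℤ) - ((i : ℕ) : ℤ))) * β ^ j) ≤ 0 := by
    apply Finset.sum_nonpos
    intro j hj
    rw [Finset.mem_Icc] at hj
    have hΦu : (Φ fun i => u (j + (t : ℤ) - ((i : ℕ) : ℤ))) = Λ := by
      rw [key1 j hj.1 hj.2]
      exact hcontra
    have hΦvA : (Φ fun i => v (j + (t : ℤ) - ((i : ℕ) : ℤ))) ∈ A :=
      hpar.1 _ (fun i => hvB _)
    have hΦvle : (Φ fun i => v (j + (t : ℤ) - ((i : ℕ) : ℤ))) ≤ Λ :=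
      A.le_max' _ hΦvA
    rw [hΦu, ← sub_mul]
    exact mul_nonpos_of_nonpos_of_nonneg (sub_nonpos.mpr hΦvle) (zpow_nonneg hβ0.le j)
  have hfin : Λ * β ^ m ≤ 0 := by
    rw [← e1, e2, e3, e4]; exact e5
  exact absurd hfin (not_le.mpr (mul_pos hΛpos (zpow_pos hβ0 m)))
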